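/- Let R = R₀ + R₁ where R₀ is the quaternionic projective curvature tensor on (V,I,J,K) and R₁ is an algebraic curvature tensor that is Kähler with respect to I (so R₁^iso(X,IX,Y,IY) = 0 for orthonormal {X,IX,Y,IY}). If {X,IX,Y,IY} is orthonormal and R^iso(X,IX,IY,Y) = 0, then R₁(X,IX,Y,IY) = −(1 + e(X,Y))/2, where e(X,Y) = ⟨JX,Y⟩² + ⟨KX,Y⟩². -/
import Mathlib


open scoped RealInnerProductSpace
set_option maxHeartbeats 1000000

/-- The curvature tensor `R₀` of quaternionic projective space as a `(0,4)`-tensor. -/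
noncomputable def quatR0 {E : Type*} [NormedAddCommGroup E] [InnerProductSpace ℝ E]
    (I J K : E →ₗ[ℝ] E) (X Y Z W : E) : ℝ :=
  (1 / 4) * (⟪X, Z⟫ * ⟪Y, W⟫ - ⟪Y, Z⟫ * ⟪X, W⟫
    + 2 * ⟪I X, Y⟫ * ⟪I Z, W⟫ + ⟪I X, Z⟫ * ⟪I Y, W⟫ - ⟪I Y, Z⟫ * ⟪I X, W⟫
    + 2 * ⟪J X, Y⟫ * ⟪J Z, W⟫ + ⟪J X, Z⟫ * ⟪J Y, W⟫ - ⟪J Y, Z⟫ * ⟪J X, W⟫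
    + 2 * ⟪K X, Y⟫ * ⟪K Z, W⟫ + ⟪K X, Z⟫ * ⟪K Y, W⟫ - ⟪K Y, Z⟫ * ⟪K X, W⟫)

/-- The isotropic-curvature expression of a `(0,4)`-tensor on a 4-frame. -/
noncomputable def isoCurv4 {E : Type*} (R : E → E → E → E → ℝ)
    (e₁ e₂ e₃ e₄ : E) : ℝ :=
  R e₁ e₃ e₁ e₃ + R e₁ e₄ e₁ e₄ + R e₂ e₃ e₂ e₃ + R e₂ e₄ e₂ e₄ - 2 * R e₁ e₂ e₃ e₄

/-- Let `R = R₀ + R₁` where `R₀` is the quaternionic projective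
curvature tensor on `(V,I,J,K)` and `R₁` is an algebraic curvature tensor that is
Kähler with respect to `I`.  If `{X, IX, Y, IY}` is orthonormal and
`R^iso(X,IX,IY,Y) = 0`, then `R₁(X,IX,Y,IY) = −(1 + e(X,Y))/2`, where
`e(X,Y) = ⟪JX,Y⟫² + ⟪KX,Y⟫²`. -/
theorem quat_decomposition_R1_value
    {E : Type*} [NormedAddCommGroup E] [InnerProductSpace ℝ E] [FiniteDimensional ℝ E]
    {n : ℕ} (hdim : Module.finrank ℝ E = 4 * n)
    (I J K : E →ₗ[ℝ] E)
    (hI2 : ∀ x, I (I x) = -x) (hJ2 : ∀ x, J (J x) = -x) (hK2 : ∀ x, K (K x) = -x)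
    (hIO : ∀ x y, ⟪I x, I y⟫ = ⟪x, y⟫) (hJO : ∀ x y, ⟪J x, J y⟫ = ⟪x, y⟫)
    (hKO : ∀ x y, ⟪K x, K y⟫ = ⟪x, y⟫)
    (hIJ : ∀ x, I (J x) = K x) (hJI : ∀ x, J (I x) = - K x)
    (hJK : ∀ x, J (K x) = I x) (hKJ : ∀ x, K (J x) = - I x)
    (hKI : ∀ x, K (I x) = J x) (hIK : ∀ x, I (K x) = - J x)
    (R₁ : E →ₗ[ℝ] E →ₗ[ℝ] E →ₗ[ℝ] E →ₗ[ℝ] ℝ)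
    (hA : ∀ x y z w, R₁ x y z w = - R₁ y x z w)
    (hP : ∀ x y z w, R₁ x y z w = R₁ z w x y)
    (hB1 : ∀ x y z w, R₁ x y z w + R₁ y z x w + R₁ z x y w = 0)
    (hKae : ∀ x y z w, R₁ (I x) (I y) z w = R₁ x y z w)
    (X Y : E) (hX : ‖X‖ = 1) (hY : ‖Y‖ = 1)
    (hXY : ⟪X, Y⟫ = 0) (hXIY : ⟪X, I Y⟫ = 0)
    (hiso : isoCurv4 (fun x y z w => quatR0 I J K x y z w + R₁ x y z w)
      X (I X) (I Y) Y = 0) :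
    R₁ X (I X) Y (I Y) = -(1 + (⟪J X, Y⟫ ^ 2 + ⟪K X, Y⟫ ^ 2)) / 2 :=  by
  -- skew-adjointness of I, J, K
  have skI : ∀ x y : E, ⟪I x, y⟫ = -⟪x, I y⟫ := by
    intro x y
    have h := hIO x (I y)
    rw [hI2, inner_neg_right] at h
    linarith
  have skJ : ∀ x y : E, ⟪J x, y⟫ = -⟪x, J y⟫ := by
    intro x y
    have h := hJO x (J y)
    rw [hJ2, inner_neg_right] at h
    linarith
  have skK : ∀ x y : E, ⟪K x, y⟫ = -⟪x, K y⟫ := by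
    intro x y
    have h := hKO x (K y)
    rw [hK2, inner_neg_right] at h
    linarith
  -- basic inner product values
  have hXX : ⟪X, X⟫ = (1:ℝ) := by
    have := real_inner_self_eq_norm_sq X
    rw [hX] at this; simpa using this
  have hYY : ⟪Y, Y⟫ = (1:ℝ) := by
    have := real_inner_self_eq_norm_sq Y
    rw [hY] at this; simpa using this
  have selfzero : ∀ (M : E →ₗ[ℝ] E), (∀ x y : E, ⟪M x, y⟫ = -⟪x, M y⟫) →
      ∀ v : E, ⟪v, M v⟫ = 0 := by
    intro M hM v
    have h1 := hM v v
    have h2 := real_inner_comm (M v) v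
    linarith
  have hXIX : ⟪X, I X⟫ = 0 := selfzero I skI X
  have hXJX : ⟪X, J X⟫ = 0 := selfzero J skJ X
  have hXKX : ⟪X, K X⟫ = 0 := selfzero K skK X
  have hYIY : ⟪Y, I Y⟫ = 0 := selfzero I skI Y
  have hYJY : ⟪Y, J Y⟫ = 0 := selfzero J skJ Y
  have hYKY : ⟪Y, K Y⟫ = 0 := selfzero K skK Y
  have hYX : ⟪Y, X⟫ = 0 := by rw [real_inner_comm]; exact hXY
  have hYIX : ⟪Y, I X⟫ = 0 := by
    rw [real_inner_comm, skI]; rw [hXIY]; ring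
  have hYJX : ⟪Y, J X⟫ = -⟪X, J Y⟫ := by
    rw [real_inner_comm, skJ]
  have hYKX : ⟪Y, K X⟫ = -⟪X, K Y⟫ := by
    rw [real_inner_comm, skK]
  -- R₁ identities
  have hswap : ∀ z w : E, R₁ (I X) Y z w = - R₁ X (I Y) z w := by
    intro z w
    have h := hKae X (I Y) z w
    rw [hI2] at h
    simp only [map_neg, LinearMap.neg_apply] at h
    linarith
  have hlast : ∀ x y z w : E, R₁ x y z w = - R₁ x y w z := by
    intro x y z w
    rw [hP x y z w, hA z w x y, hP w z x y]
  set Rv := R₁ X (I X) Y (I Y) with hRv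
  have hT3 : R₁ (I X) (I Y) (I X) (I Y) = R₁ X Y X Y := by
    rw [hKae, hP, hKae]
  have hT4 : R₁ (I X) Y (I X) Y = R₁ X (I Y) X (I Y) := by
    rw [hswap, hP X (I Y) (I X) Y, hswap, neg_neg]
  have hT5 : R₁ X (I X) (I Y) Y = - Rv := by
    rw [hlast X (I X) (I Y) Y, hRv]
  have hBianchi : R₁ X (I Y) X (I Y) + R₁ X Y X Y = Rv := by
    have hb := hB1 X (I X) Y (I Y)
    have h2 : R₁ (I X) Y X (I Y) = - R₁ X (I Y) X (I Y) := by
      rw [hswap, hP X (I Y), hP X (I Y) X (I Y)]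
    have h3 : R₁ Y X (I X) (I Y) = - R₁ X Y X Y := by
      rw [hA, hP, hKae]
    rw [h2, h3] at hb
    linarith
  -- expand the iso hypothesis
  simp only [isoCurv4, quatR0] at hiso
  simp only [hI2, hJ2, hK2, hIJ, hJI, hJK, hKJ, hKI, hIK, inner_neg_left,
    inner_neg_right, skI, skJ, skK, hXX, hYY, hXY, hYX, hXIY, hYIX, hXIX,
    hXJX, hXKX, hYIY, hYJY, hYKY, hYJX, hYKX, neg_neg] at hiso
  rw [hT3, hT4, hT5] at hiso
  rw [skJ, skK]
  nlinarith [hiso, hBianchi]
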